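/- arXiv:1006.4251 — 2 statements merged into one kernel-verified Lean document; each statement's English description precedes it below -/
import Mathlib

section
/- Let ⟨A, Δ⟩ be a Jordan coalgebra over a field k of characteristic not 2 whose dual algebra A* is unital. Every weakly inner derivation d ∈ WIntDer(A*) extends to a derivation D of the null extension C = A* ⊕ A (with D = d on A*) such that: (i) BD ⊆ B for every subcoalgebra B of ⟨A, Δ⟩; (ii) ⟨fd, a⟩ = −⟨f, aD⟩ for all f ∈ A* and a ∈ A; and (iii) for every finite-dimensional subcoalgebra B there exists i ∈ IntDer(A*) such that bD = b·i and ⟨fD, b⟩ = ⟨fi, b⟩ for all b ∈ B and f ∈ A*. -/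
open TensorProduct

variable {k : Type*} [Field k] {A : Type*} [AddCommGroup A] [Module k A]

/-- The multiplication on the dual space `A*` induced by a comultiplication `Δ`:
`⟨fg, a⟩ = Σ ⟨f, a₍₁₎⟩⟨g, a₍₂₎⟩`. -/
noncomputable def dmul (Δ : A →ₗ[k] A ⊗[k] A) (f g : (A →ₗ[k] k)) : (A →ₗ[k] k) :=
  (TensorProduct.lid k k).toLinearMap ∘ₗ TensorProduct.map f g ∘ₗ Δ

/-- The left action `f·a = Σ a₍₁₎ ⟨f, a₍₂₎⟩` of the dual algebra on `A`. -/
noncomputable def lact (Δ : A →ₗ[k] A ⊗[k] A) (f : (A →ₗ[k] k)) : A →ₗ[k] A :=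
  (TensorProduct.rid k A).toLinearMap ∘ₗ TensorProduct.map LinearMap.id f ∘ₗ Δ

/-- The right action `a·f = Σ ⟨f, a₍₁₎⟩ a₍₂₎` of the dual algebra on `A`. -/
noncomputable def ract (Δ : A →ₗ[k] A ⊗[k] A) (f : (A →ₗ[k] k)) : A →ₗ[k] A :=
  (TensorProduct.lid k A).toLinearMap ∘ₗ TensorProduct.map f LinearMap.id ∘ₗ Δ

/-- `⟨A, Δ⟩` is a Jordan coalgebra: its dual algebra is commutative and satisfies
the Jordan identity `((ff)g)f = (ff)(gf)`. -/
def IsJordanCoalgebra (Δ : A →ₗ[k] A ⊗[k] A) : Prop :=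
  (∀ f g : (A →ₗ[k] k), dmul Δ f g = dmul Δ g f) ∧
  (∀ f g : (A →ₗ[k] k),
    dmul Δ (dmul Δ (dmul Δ f f) g) f = dmul Δ (dmul Δ f f) (dmul Δ g f))

/-- `B` is a subcoalgebra: `Δ(B) ⊆ B ⊗ B`. -/
def IsSubcoalgebra (Δ : A →ₗ[k] A ⊗[k] A) (B : Submodule k A) : Prop :=
  ∀ b ∈ B, Δ b ∈ LinearMap.range (TensorProduct.map B.subtype B.subtype)

/-- `B` is a coideal: `Δ(B) ⊆ B ⊗ A + A ⊗ B`. -/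
def IsCoideal (Δ : A →ₗ[k] A ⊗[k] A) (B : Submodule k A) : Prop :=
  ∀ b ∈ B, Δ b ∈
    LinearMap.range (TensorProduct.map B.subtype (LinearMap.id (R := k) (M := A))) ⊔
    LinearMap.range (TensorProduct.map (LinearMap.id (R := k) (M := A)) B.subtype)

/-- A derivation of the dual algebra `A*`. -/
def IsDerivation (Δ : A →ₗ[k] A ⊗[k] A)
    (d : (A →ₗ[k] k) →ₗ[k] (A →ₗ[k] k)) : Prop :=
  ∀ f g : (A →ₗ[k] k), d (dmul Δ f g) = dmul Δ (d f) g + dmul Δ f (d g)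

theorem dmul_add_left (Δ : A →ₗ[k] A ⊗[k] A) (f₁ f₂ g : (A →ₗ[k] k)) :
    dmul Δ (f₁ + f₂) g = dmul Δ f₁ g + dmul Δ f₂ g := by
  unfold dmul; rw [TensorProduct.map_add_left]; ext a; simp

theorem dmul_add_right (Δ : A →ₗ[k] A ⊗[k] A) (f g₁ g₂ : (A →ₗ[k] k)) :
    dmul Δ f (g₁ + g₂) = dmul Δ f g₁ + dmul Δ f g₂ := by
  unfold dmul; rw [TensorProduct.map_add_right]; ext a; simp

theorem dmul_smul_left (Δ : A →ₗ[k] A ⊗[k] A) (c : k) (f g : (A →ₗ[k] k)) :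
    dmul Δ (c • f) g = c • dmul Δ f g := by
  unfold dmul; rw [TensorProduct.map_smul_left]; ext a; simp

theorem dmul_smul_right (Δ : A →ₗ[k] A ⊗[k] A) (c : k) (f g : (A →ₗ[k] k)) :
    dmul Δ f (c • g) = c • dmul Δ f g := by
  unfold dmul; rw [TensorProduct.map_smul_right]; ext a; simp

theorem dmul_zero_left (Δ : A →ₗ[k] A ⊗[k] A) (g : (A →ₗ[k] k)) :
    dmul Δ (0 : (A →ₗ[k] k)) g = 0 := by
  ext a; simp [dmul]

theorem dmul_zero_right (Δ : A →ₗ[k] A ⊗[k] A) (f : (A →ₗ[k] k)) :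
    dmul Δ f (0 : (A →ₗ[k] k)) = 0 := by
  ext a; simp [dmul]

/-- The operator of right multiplication `f' : g ↦ gf` on the dual algebra. -/
noncomputable def Rop (Δ : A →ₗ[k] A ⊗[k] A) (f : (A →ₗ[k] k)) :
    (A →ₗ[k] k) →ₗ[k] (A →ₗ[k] k) where
  toFun g := dmul Δ g f
  map_add' g₁ g₂ := dmul_add_left Δ g₁ g₂ f
  map_smul' c g := dmul_smul_left Δ c g f

/-- The inner derivation `[f,g] = f'g' - g'f'` (in right-operator convention,
`x[f,g] = (xf)g - (xg)f`). -/
noncomputable def commD (Δ : A →ₗ[k] A ⊗[k] A) (f g : (A →ₗ[k] k)) :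
    (A →ₗ[k] k) →ₗ[k] (A →ₗ[k] k) :=
  Rop Δ g ∘ₗ Rop Δ f - Rop Δ f ∘ₗ Rop Δ g

/-- The space of inner derivations of the dual algebra. -/
noncomputable def IntDer (Δ : A →ₗ[k] A ⊗[k] A) :
    Submodule k ((A →ₗ[k] k) →ₗ[k] (A →ₗ[k] k)) :=
  Submodule.span k {d | ∃ f g : (A →ₗ[k] k), d = commD Δ f g}

/-- A weakly inner derivation of the dual algebra: a derivation that agrees with some
inner derivation on every finite-dimensional subcoalgebra. -/
def IsWIntDer (Δ : A →ₗ[k] A ⊗[k] A)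
    (d : (A →ₗ[k] k) →ₗ[k] (A →ₗ[k] k)) : Prop :=
  IsDerivation Δ d ∧
  ∀ B : Submodule k A, IsSubcoalgebra Δ B → FiniteDimensional k B →
    ∃ i ∈ IntDer Δ, ∀ f : (A →ₗ[k] k), ∀ b ∈ B, d f b = i f b

/-- The space of weakly inner derivations, as a submodule of `End(A*)`. -/
noncomputable def WIntDer (Δ : A →ₗ[k] A ⊗[k] A) :
    Submodule k ((A →ₗ[k] k) →ₗ[k] (A →ₗ[k] k)) where
  carrier := {d | IsWIntDer Δ d}
  zero_mem' := by
    refine ⟨fun f g => by simp [dmul_zero_left, dmul_zero_right],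
      fun B hB hfin => ⟨0, Submodule.zero_mem _, fun f b hb => by simp⟩⟩
  add_mem' := by
    rintro d₁ d₂ ⟨hd₁, hw₁⟩ ⟨hd₂, hw₂⟩
    refine ⟨fun f g => ?_, fun B hB hfin => ?_⟩
    · simp only [LinearMap.add_apply, hd₁ f g, hd₂ f g, dmul_add_left, dmul_add_right]
      abel
    · obtain ⟨i₁, hi₁, he₁⟩ := hw₁ B hB hfin
      obtain ⟨i₂, hi₂, he₂⟩ := hw₂ B hB hfin
      exact ⟨i₁ + i₂, Submodule.add_mem _ hi₁ hi₂, fun f b hb => by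
        simp [LinearMap.add_apply, he₁ f b hb, he₂ f b hb]⟩
  smul_mem' := by
    rintro c d ⟨hd, hw⟩
    refine ⟨fun f g => ?_, fun B hB hfin => ?_⟩
    · simp only [LinearMap.smul_apply, hd f g, dmul_smul_left, dmul_smul_right, smul_add]
    · obtain ⟨i, hi, he⟩ := hw B hB hfin
      exact ⟨c • i, Submodule.smul_mem _ c hi, fun f b hb => by
        simp [LinearMap.smul_apply, he f b hb]⟩
/-- Multiplication in the null extension `C = A* ⊕ A`. -/
noncomputable def cmul (Δ : A →ₗ[k] A ⊗[k] A) (x y : (A →ₗ[k] k) × A) :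
    (A →ₗ[k] k) × A :=
  (dmul Δ x.1 y.1, lact Δ x.1 y.2 + lact Δ y.1 x.2)

theorem lact_add_left (Δ : A →ₗ[k] A ⊗[k] A) (f₁ f₂ : (A →ₗ[k] k)) (a : A) :
    lact Δ (f₁ + f₂) a = lact Δ f₁ a + lact Δ f₂ a := by
  simp [lact, TensorProduct.map_add_right]

theorem lact_smul_left (Δ : A →ₗ[k] A ⊗[k] A) (c : k) (f : (A →ₗ[k] k)) (a : A) :
    lact Δ (c • f) a = c • lact Δ f a := by
  simp [lact, TensorProduct.map_smul_right]

/-- Right multiplication by an element of the null extension `C = A* ⊕ A`,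
as a linear operator on `C`. -/
noncomputable def RopC (Δ : A →ₗ[k] A ⊗[k] A) (x : (A →ₗ[k] k) × A) :
    ((A →ₗ[k] k) × A) →ₗ[k] ((A →ₗ[k] k) × A) where
  toFun y := cmul Δ y x
  map_add' y z := by
    simp only [cmul, Prod.fst_add, Prod.snd_add, Prod.mk_add_mk, dmul_add_left,
      lact_add_left, map_add]
    rw [Prod.mk.injEq]
    constructor
    · rfl
    · abel
  map_smul' c y := by
    simp only [cmul, Prod.smul_fst, Prod.smul_snd, Prod.smul_mk, dmul_smul_left,
      lact_smul_left, map_smul, RingHom.id_apply, smul_add]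

/-- The operator `[x,y] = x'y' - y'x'` on the null extension `C`
(right-operator convention: `z[x,y] = (zx)y - (zy)x`). -/
noncomputable def commC (Δ : A →ₗ[k] A ⊗[k] A) (x y : (A →ₗ[k] k) × A) :
    ((A →ₗ[k] k) × A) →ₗ[k] ((A →ₗ[k] k) × A) :=
  RopC Δ y ∘ₗ RopC Δ x - RopC Δ x ∘ₗ RopC Δ y

/-- The mixed commutator operator `[f,a]` on `C`, for `f ∈ A*` and `a ∈ A`. -/
noncomputable def commMixed (Δ : A →ₗ[k] A ⊗[k] A) (f : (A →ₗ[k] k)) (a : A) :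
    ((A →ₗ[k] k) × A) →ₗ[k] ((A →ₗ[k] k) × A) :=
  commC Δ (f, 0) (0, a)

/-- The space `[A*, A]`, spanned by the mixed commutators, inside `End(C)`. -/
noncomputable def CommAA (Δ : A →ₗ[k] A ⊗[k] A) :
    Submodule k (((A →ₗ[k] k) × A) →ₗ[k] ((A →ₗ[k] k) × A)) :=
  Submodule.span k {u | ∃ (f : (A →ₗ[k] k)) (a : A), u = commMixed Δ f a}

section Aux
variable (Δ : A →ₗ[k] A ⊗[k] A)

theorem sep {x : A} (h : ∀ f : A →ₗ[k] k, f x = 0) : x = 0 :=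
  (Module.forall_dual_apply_eq_zero_iff k x).mp h

theorem sep_eq {x y : A} (h : ∀ f : A →ₗ[k] k, f x = f y) : x = y := by
  have hz : x - y = 0 := sep (k := k) (fun f => by rw [LinearMap.map_sub, h f, sub_self])
  exact sub_eq_zero.mp hz

theorem pair_lemma (p q : A →ₗ[k] k) (x : A) : dmul Δ p q x = p (lact Δ q x) := by
  have h : ∀ t : A ⊗[k] A, (TensorProduct.lid k k) (TensorProduct.map p q t)
      = p ((TensorProduct.rid k A) (TensorProduct.map LinearMap.id q t)) := by
    intro t
    induction t using TensorProduct.induction_on with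
    | zero => simp
    | tmul y z => simp [mul_comm, smul_eq_mul]
    | add s t hs ht => simp [map_add, hs, ht]
  simpa [dmul, lact] using h (Δ x)

theorem pair_lemma_left (p q : A →ₗ[k] k) (x : A) :
    dmul Δ p q x = q ((TensorProduct.lid k A) (TensorProduct.map p LinearMap.id (Δ x))) := by
  have h : ∀ t : A ⊗[k] A, (TensorProduct.lid k k) (TensorProduct.map p q t)
      = q ((TensorProduct.lid k A) (TensorProduct.map p LinearMap.id t)) := by
    intro t
    induction t using TensorProduct.induction_on with
    | zero => simp
    | tmul y z => simp [mul_comm, smul_eq_mul]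
    | add s t hs ht => simp [map_add, hs, ht]
  simpa [dmul] using h (Δ x)

theorem lact_eq_ract (hc : ∀ f g : A →ₗ[k] k, dmul Δ f g = dmul Δ g f)
    (f : A →ₗ[k] k) (x : A) :
    lact Δ f x = (TensorProduct.lid k A) (TensorProduct.map f LinearMap.id (Δ x)) := by
  refine sep_eq (k := k) (fun g => ?_)
  rw [← pair_lemma Δ g f x, hc g f, pair_lemma_left Δ f g x]

/-- Existence of a representation of a tensor with basis vectors in the right factor. -/
theorem exists_rep_right {ι : Type*} (b : Module.Basis ι k A) (t : A ⊗[k] A) :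
    ∃ S : ι →₀ A, t = S.sum fun i x => x ⊗ₜ[k] b i := by
  classical
  induction t using TensorProduct.induction_on with
  | zero => exact ⟨0, by simp⟩
  | tmul x y =>
    refine ⟨Finsupp.mapRange (fun c => c • x) (by simp) (b.repr y), ?_⟩
    rw [Finsupp.sum_mapRange_index (by simp)]
    have h2 : ((b.repr y).sum fun i c => (c • x) ⊗ₜ[k] b i)
        = (TensorProduct.mk k A A x) ((b.repr y).sum fun i c => c • b i) := by
      rw [map_finsuppSum]
      exact Finsupp.sum_congr (fun i _ => by
        simp [TensorProduct.smul_tmul', TensorProduct.tmul_smul])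
    rw [h2, ← Finsupp.linearCombination_apply, b.linearCombination_repr]
    rfl
  | add s t hs ht =>
    obtain ⟨S1, rfl⟩ := hs; obtain ⟨S2, rfl⟩ := ht
    refine ⟨S1 + S2, ?_⟩
    rw [Finsupp.sum_add_index' (by simp) (by intros; rw [TensorProduct.add_tmul])]

/-- Existence of a representation with basis vectors in the left factor. -/
theorem exists_rep_left {ι : Type*} (b : Module.Basis ι k A) (t : A ⊗[k] A) :
    ∃ S : ι →₀ A, t = S.sum fun i x => b i ⊗ₜ[k] x := by
  classical
  induction t using TensorProduct.induction_on with
  | zero => exact ⟨0, by simp⟩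
  | tmul x y =>
    refine ⟨Finsupp.mapRange (fun c => c • y) (by simp) (b.repr x), ?_⟩
    rw [Finsupp.sum_mapRange_index (by simp)]
    have h2 : ((b.repr x).sum fun i c => b i ⊗ₜ[k] (c • y))
        = ((TensorProduct.mk k A A).flip y) ((b.repr x).sum fun i c => c • b i) := by
      rw [map_finsuppSum]
      exact Finsupp.sum_congr (fun i _ => by
        simp [TensorProduct.smul_tmul', TensorProduct.tmul_smul])
    rw [h2, ← Finsupp.linearCombination_apply, b.linearCombination_repr]
    rfl
  | add s t hs ht =>
    obtain ⟨S1, rfl⟩ := hs; obtain ⟨S2, rfl⟩ := ht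
    refine ⟨S1 + S2, ?_⟩
    rw [Finsupp.sum_add_index' (by simp) (by intros; rw [TensorProduct.tmul_add])]

theorem coord_rep_right {ι : Type*} (b : Module.Basis ι k A) (S : ι →₀ A) (j : ι) :
    (TensorProduct.rid k A) (TensorProduct.map LinearMap.id (b.coord j)
      (S.sum fun i x => x ⊗ₜ[k] b i)) = S j := by
  classical
  rw [map_finsuppSum, map_finsuppSum]
  have h1 : ∀ i ∈ S.support, (TensorProduct.rid k A)
      (TensorProduct.map LinearMap.id (b.coord j) ((S i) ⊗ₜ[k] b i))
      = (if i = j then (1:k) else 0) • S i := by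
    intro i _
    simp [Module.Basis.coord_apply, Module.Basis.repr_self, Finsupp.single_apply]
  rw [Finsupp.sum, Finset.sum_congr rfl h1]
  by_cases hj : j ∈ S.support
  · rw [Finset.sum_eq_single j]
    · simp
    · intro i _ hij; simp [hij]
    · intro h; exact absurd hj h
  · rw [Finset.sum_eq_zero]
    · simp [Finsupp.notMem_support_iff.mp hj]
    · intro i hi
      have : i ≠ j := fun h => hj (h ▸ hi)
      simp [this]

theorem coord_rep_left {ι : Type*} (b : Module.Basis ι k A) (S : ι →₀ A) (j : ι) :
    (TensorProduct.lid k A) (TensorProduct.map (b.coord j) LinearMap.id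
      (S.sum fun i x => b i ⊗ₜ[k] x)) = S j := by
  classical
  rw [map_finsuppSum, map_finsuppSum]
  have h1 : ∀ i ∈ S.support, (TensorProduct.lid k A)
      (TensorProduct.map (b.coord j) LinearMap.id (b i ⊗ₜ[k] (S i)))
      = (if i = j then (1:k) else 0) • S i := by
    intro i _
    simp [Module.Basis.coord_apply, Module.Basis.repr_self, Finsupp.single_apply]
  rw [Finsupp.sum, Finset.sum_congr rfl h1]
  by_cases hj : j ∈ S.support
  · rw [Finset.sum_eq_single j]
    · simp
    · intro i _ hij; simp [hij]
    · intro h; exact absurd hj h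
  · rw [Finset.sum_eq_zero]
    · simp [Finsupp.notMem_support_iff.mp hj]
    · intro i hi
      have : i ≠ j := fun h => hj (h ▸ hi)
      simp [this]

theorem mem_range_right (B : Submodule k A) (t : A ⊗[k] A)
    (h : ∀ f : A →ₗ[k] k, (TensorProduct.rid k A) (TensorProduct.map LinearMap.id f t) ∈ B) :
    t ∈ LinearMap.range (TensorProduct.map B.subtype (LinearMap.id (R := k) (M := A))) := by
  classical
  obtain ⟨S, rfl⟩ := exists_rep_right (Module.Basis.ofVectorSpace k A) t
  set b := Module.Basis.ofVectorSpace k A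
  rw [Finsupp.sum]
  refine Submodule.sum_mem _ (fun i hi => ?_)
  have hSi : S i ∈ B := by have := h (b.coord i); rwa [coord_rep_right] at this
  exact ⟨(⟨S i, hSi⟩ : B) ⊗ₜ[k] b i, by simp⟩

theorem mem_range_left (B : Submodule k A) (t : A ⊗[k] A)
    (h : ∀ f : A →ₗ[k] k, (TensorProduct.lid k A) (TensorProduct.map f LinearMap.id t) ∈ B) :
    t ∈ LinearMap.range (TensorProduct.map (LinearMap.id (R := k) (M := A)) B.subtype) := by
  classical
  obtain ⟨S, rfl⟩ := exists_rep_left (Module.Basis.ofVectorSpace k A) t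
  set b := Module.Basis.ofVectorSpace k A
  rw [Finsupp.sum]
  refine Submodule.sum_mem _ (fun i hi => ?_)
  have hSi : S i ∈ B := by have := h (b.coord i); rwa [coord_rep_left] at this
  exact ⟨b i ⊗ₜ[k] (⟨S i, hSi⟩ : B), by simp⟩

theorem inter_range (B : Submodule k A) (t : A ⊗[k] A)
    (h1 : t ∈ LinearMap.range (TensorProduct.map B.subtype (LinearMap.id (R := k) (M := A))))
    (h2 : t ∈ LinearMap.range (TensorProduct.map (LinearMap.id (R := k) (M := A)) B.subtype)) :
    t ∈ LinearMap.range (TensorProduct.map B.subtype B.subtype) := by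
  obtain ⟨q, hq⟩ := B.exists_isCompl
  set π : A →ₗ[k] B := B.linearProjOfIsCompl q hq with hπdef
  have hπ : ∀ x : B, π (x : A) = x := fun x => Submodule.linearProjOfIsCompl_apply_left hq x
  obtain ⟨s, rfl⟩ := h1
  obtain ⟨u, hu⟩ := h2
  have key : TensorProduct.map (B.subtype ∘ₗ π) LinearMap.id
      (TensorProduct.map B.subtype LinearMap.id s) = TensorProduct.map B.subtype LinearMap.id s := by
    rw [← LinearMap.comp_apply, ← TensorProduct.map_comp]
    congr 1
    · ext x; simp [hπ]
  rw [← key, ← hu]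
  rw [← LinearMap.comp_apply, ← TensorProduct.map_comp]
  refine ⟨TensorProduct.map π LinearMap.id u, ?_⟩
  rw [← LinearMap.comp_apply, ← TensorProduct.map_comp]
  congr 1

/-- A submodule stable under the left action is a subcoalgebra. -/
theorem lstable_isSubcoalgebra (hc : ∀ f g : A →ₗ[k] k, dmul Δ f g = dmul Δ g f)
    (B : Submodule k A) (hB : ∀ f : A →ₗ[k] k, ∀ x ∈ B, lact Δ f x ∈ B) :
    IsSubcoalgebra Δ B := by
  intro x hx
  refine inter_range B (Δ x) ?_ ?_
  · refine mem_range_right B (Δ x) (fun f => ?_)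
    have := hB f x hx
    simpa [lact] using this
  · refine mem_range_left B (Δ x) (fun f => ?_)
    have := hB f x hx
    rw [lact_eq_ract Δ hc] at this
    exact this

/-- A subcoalgebra is stable under the left action. -/
theorem isSubcoalgebra_lstable (B : Submodule k A) (hB : IsSubcoalgebra Δ B)
    (f : A →ₗ[k] k) (x : A) (hx : x ∈ B) : lact Δ f x ∈ B := by
  obtain ⟨t, ht⟩ := hB x hx
  have : lact Δ f x = (TensorProduct.rid k A) (TensorProduct.map LinearMap.id f
      (TensorProduct.map B.subtype B.subtype t)) := by simp [lact, ht]
  rw [this]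
  have key : ∀ u : (B : Submodule k A) ⊗[k] (B : Submodule k A),
      (TensorProduct.rid k A) (TensorProduct.map LinearMap.id f
        (TensorProduct.map B.subtype B.subtype u)) ∈ B := by
    intro u
    induction u using TensorProduct.induction_on with
    | zero => simp
    | tmul y z => simpa using B.smul_mem (f (z : A)) y.2
    | add s t hs ht => rw [map_add, map_add, map_add]; exact B.add_mem hs ht
  exact key t

theorem ML6 (hJ : ∀ f g : A →ₗ[k] k,
      dmul Δ (dmul Δ (dmul Δ f f) g) f = dmul Δ (dmul Δ f f) (dmul Δ g f))
    (f1 f2 f3 g : A →ₗ[k] k) :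
    dmul Δ (dmul Δ (dmul Δ f1 f2) g) f3 + dmul Δ (dmul Δ (dmul Δ f1 f3) g) f2 + dmul Δ (dmul Δ (dmul Δ f2 f1) g) f3 + dmul Δ (dmul Δ (dmul Δ f2 f3) g) f1 + dmul Δ (dmul Δ (dmul Δ f3 f1) g) f2 + dmul Δ (dmul Δ (dmul Δ f3 f2) g) f1
    = dmul Δ (dmul Δ f1 f2) (dmul Δ g f3) + dmul Δ (dmul Δ f1 f3) (dmul Δ g f2) + dmul Δ (dmul Δ f2 f1) (dmul Δ g f3) + dmul Δ (dmul Δ f2 f3) (dmul Δ g f1) + dmul Δ (dmul Δ f3 f1) (dmul Δ g f2) + dmul Δ (dmul Δ f3 f2) (dmul Δ g f1) := by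
  have e : (dmul Δ (dmul Δ (dmul Δ f1 f2) g) f3 + dmul Δ (dmul Δ (dmul Δ f1 f3) g) f2 + dmul Δ (dmul Δ (dmul Δ f2 f1) g) f3 + dmul Δ (dmul Δ (dmul Δ f2 f3) g) f1 + dmul Δ (dmul Δ (dmul Δ f3 f1) g) f2 + dmul Δ (dmul Δ (dmul Δ f3 f2) g) f1)
      - (dmul Δ (dmul Δ f1 f2) (dmul Δ g f3) + dmul Δ (dmul Δ f1 f3) (dmul Δ g f2) + dmul Δ (dmul Δ f2 f1) (dmul Δ g f3) + dmul Δ (dmul Δ f2 f3) (dmul Δ g f1) + dmul Δ (dmul Δ f3 f1) (dmul Δ g f2) + dmul Δ (dmul Δ f3 f2) (dmul Δ g f1))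
      = (dmul Δ (dmul Δ (dmul Δ (f1 + f2 + f3) (f1 + f2 + f3)) g) (f1 + f2 + f3) - dmul Δ (dmul Δ (f1 + f2 + f3) (f1 + f2 + f3)) (dmul Δ g (f1 + f2 + f3))) - (dmul Δ (dmul Δ (dmul Δ (f1 + f2) (f1 + f2)) g) (f1 + f2) - dmul Δ (dmul Δ (f1 + f2) (f1 + f2)) (dmul Δ g (f1 + f2))) - (dmul Δ (dmul Δ (dmul Δ (f1 + f3) (f1 + f3)) g) (f1 + f3) - dmul Δ (dmul Δ (f1 + f3) (f1 + f3)) (dmul Δ g (f1 + f3))) - (dmul Δ (dmul Δ (dmul Δ (f2 + f3) (f2 + f3)) g) (f2 + f3) - dmul Δ (dmul Δ (f2 + f3) (f2 + f3)) (dmul Δ g (f2 + f3))) + (dmul Δ (dmul Δ (dmul Δ (f1) (f1)) g) (f1) - dmul Δ (dmul Δ (f1) (f1)) (dmul Δ g (f1))) + (dmul Δ (dmul Δ (dmul Δ (f2) (f2)) g) (f2) - dmul Δ (dmul Δ (f2) (f2)) (dmul Δ g (f2))) + (dmul Δ (dmul Δ (dmul Δ (f3) (f3)) g) (f3) - dmul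 Δ (dmul Δ (f3) (f3)) (dmul Δ g (f3))) := by
    simp only [dmul_add_left, dmul_add_right]
    abel
  rw [hJ (f1 + f2 + f3) g, hJ (f1 + f2) g, hJ (f1 + f3) g, hJ (f2 + f3) g,
    hJ f1 g, hJ f2 g, hJ f3 g] at e
  simp only [sub_self, add_zero, sub_zero, zero_sub, neg_zero, zero_add] at e
  exact sub_eq_zero.mp (by rw [e])

theorem star_id (hc : ∀ f g : A →ₗ[k] k, dmul Δ f g = dmul Δ g f)
    (hJ : ∀ f g : A →ₗ[k] k,
      dmul Δ (dmul Δ (dmul Δ f f) g) f = dmul Δ (dmul Δ f f) (dmul Δ g f))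
    (h2 : (2 : k) ≠ 0) (f g h : A →ₗ[k] k) (x : A) :
    lact Δ f (lact Δ g (lact Δ h x)) + lact Δ h (lact Δ g (lact Δ f x))
      + lact Δ (dmul Δ (dmul Δ f h) g) x
    = lact Δ f (lact Δ (dmul Δ g h) x) + lact Δ h (lact Δ (dmul Δ g f) x)
      + lact Δ g (lact Δ (dmul Δ f h) x) := by
  refine sep_eq (k := k) (fun u => ?_)
  have base := DFunLike.congr_fun (ML6 Δ hJ u f h g) x
  simp only [LinearMap.add_apply] at base
  have t1 : dmul Δ (dmul Δ (dmul Δ u f) g) h x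
      = u (lact Δ f (lact Δ g (lact Δ h x))) := by
    rw [pair_lemma, pair_lemma, pair_lemma]
  have t2 : dmul Δ (dmul Δ (dmul Δ u h) g) f x
      = u (lact Δ h (lact Δ g (lact Δ f x))) := by
    rw [pair_lemma, pair_lemma, pair_lemma]
  have t3 : dmul Δ (dmul Δ (dmul Δ f u) g) h x
      = u (lact Δ f (lact Δ g (lact Δ h x))) := by
    rw [hc f u]; exact t1
  have t4 : dmul Δ (dmul Δ (dmul Δ h u) g) f x
      = u (lact Δ h (lact Δ g (lact Δ f x))) := by
    rw [hc h u]; exact t2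
  have t5 : dmul Δ (dmul Δ (dmul Δ f h) g) u x
      = u (lact Δ (dmul Δ (dmul Δ f h) g) x) := by
    rw [hc (dmul Δ (dmul Δ f h) g) u, pair_lemma]
  have t6 : dmul Δ (dmul Δ (dmul Δ h f) g) u x
      = u (lact Δ (dmul Δ (dmul Δ f h) g) x) := by
    rw [hc h f]; exact t5
  have s1 : dmul Δ (dmul Δ u f) (dmul Δ g h) x
      = u (lact Δ f (lact Δ (dmul Δ g h) x)) := by
    rw [pair_lemma, pair_lemma]
  have s2 : dmul Δ (dmul Δ u h) (dmul Δ g f) x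
      = u (lact Δ h (lact Δ (dmul Δ g f) x)) := by
    rw [pair_lemma, pair_lemma]
  have s3 : dmul Δ (dmul Δ f u) (dmul Δ g h) x
      = u (lact Δ f (lact Δ (dmul Δ g h) x)) := by
    rw [hc f u]; exact s1
  have s4 : dmul Δ (dmul Δ h u) (dmul Δ g f) x
      = u (lact Δ h (lact Δ (dmul Δ g f) x)) := by
    rw [hc h u]; exact s2
  have s5 : dmul Δ (dmul Δ f h) (dmul Δ g u) x
      = u (lact Δ g (lact Δ (dmul Δ f h) x)) := by
    rw [hc (dmul Δ f h) (dmul Δ g u), pair_lemma, hc g u, pair_lemma]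
  have s6 : dmul Δ (dmul Δ h f) (dmul Δ g u) x
      = u (lact Δ g (lact Δ (dmul Δ f h) x)) := by
    rw [hc h f]; exact s5
  rw [t1, t2, t3, t4, t5, t6, s1, s2, s3, s4, s5, s6] at base
  refine mul_left_cancel₀ h2 ?_
  simp only [map_add]
  linear_combination base

/-- The action of a word (list of functionals), innermost letter first. -/
noncomputable def LW (Δ : A →ₗ[k] A ⊗[k] A) : List (A →ₗ[k] k) → (A →ₗ[k] A)
  | [] => LinearMap.id
  | f :: w => (LW Δ w) ∘ₗ lact Δ f

@[simp] theorem LW_nil : LW Δ [] = LinearMap.id := rfl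

@[simp] theorem LW_cons (f : A →ₗ[k] k) (w : List (A →ₗ[k] k)) :
    LW Δ (f :: w) = (LW Δ w) ∘ₗ lact Δ f := rfl

theorem LW_append (u v : List (A →ₗ[k] k)) : LW Δ (u ++ v) = LW Δ v ∘ₗ LW Δ u := by
  induction u with
  | nil => simp
  | cons f u ih => simp [ih, LinearMap.comp_assoc]

/-- The chain of submodules approximating the subcoalgebra generated by `a`. -/
noncomputable def NC (Δ : A →ₗ[k] A ⊗[k] A) (a : A) : ℕ → Submodule k A
  | 0 => Submodule.span k {a}
  | j+1 => NC Δ a j ⊔ Submodule.span k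
      {z | ∃ (f : A →ₗ[k] k) (y : A), y ∈ NC Δ a j ∧ z = lact Δ f y}

theorem NC_le_succ (a : A) (j : ℕ) : NC Δ a j ≤ NC Δ a (j+1) := le_sup_left

theorem NC_mono (a : A) {i j : ℕ} (h : i ≤ j) : NC Δ a i ≤ NC Δ a j := by
  induction j with
  | zero => simp_all
  | succ j ih =>
    rcases Nat.lt_or_ge i (j+1) with h' | h'
    · exact le_trans (ih (Nat.lt_succ_iff.mp h')) (NC_le_succ Δ a j)
    · have : i = j + 1 := le_antisymm h h'
      simp [this]

theorem a_mem_NC (a : A) (j : ℕ) : a ∈ NC Δ a j :=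
  NC_mono Δ a (Nat.zero_le j) (Submodule.mem_span_singleton_self a)

theorem lact_mem_NC (a : A) {j : ℕ} {y : A} (hy : y ∈ NC Δ a j) (f : A →ₗ[k] k) :
    lact Δ f y ∈ NC Δ a (j+1) :=
  Submodule.mem_sup_right (Submodule.subset_span ⟨f, y, hy, rfl⟩)

theorem LW_mem_NC (a : A) {j : ℕ} {y : A} (hy : y ∈ NC Δ a j) (w : List (A →ₗ[k] k)) :
    LW Δ w y ∈ NC Δ a (j + w.length) := by
  induction w generalizing j y with
  | nil => simpa using hy
  | cons f w ih =>
    have h1 := ih (lact_mem_NC Δ a hy f)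
    have e : (j + 1) + w.length = j + (f :: w).length := by
      simp [List.length_cons]; omega
    rw [e] at h1
    simpa using h1

theorem word_mem_NC (a : A) (w : List (A →ₗ[k] k)) : LW Δ w a ∈ NC Δ a w.length := by
  simpa using LW_mem_NC Δ a (a_mem_NC Δ a 0) w

theorem exists_fd_lact (y : A) :
    ∃ W : Submodule k A, FiniteDimensional k W ∧ ∀ f : A →ₗ[k] k, lact Δ f y ∈ W := by
  have key : ∀ t : A ⊗[k] A, ∃ W : Submodule k A, FiniteDimensional k W ∧
      ∀ f : A →ₗ[k] k, (TensorProduct.rid k A) (TensorProduct.map LinearMap.id f t) ∈ W := by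
    intro t
    induction t using TensorProduct.induction_on with
    | zero => exact ⟨⊥, inferInstance, fun f => by simp⟩
    | tmul x z =>
      refine ⟨Submodule.span k {x}, FiniteDimensional.span_of_finite k (Set.finite_singleton x),
        fun f => ?_⟩
      simp only [TensorProduct.map_tmul, LinearMap.id_coe, id_eq, TensorProduct.rid_tmul]
      exact Submodule.smul_mem _ _ (Submodule.mem_span_singleton_self x)
    | add s t hs ht =>
      obtain ⟨W1, hW1, h1⟩ := hs
      obtain ⟨W2, hW2, h2⟩ := ht
      exact ⟨W1 ⊔ W2, Submodule.finiteDimensional_sup W1 W2, fun f => by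
        rw [map_add, map_add]
        exact Submodule.add_mem _ (Submodule.mem_sup_left (h1 f)) (Submodule.mem_sup_right (h2 f))⟩
  obtain ⟨W, hW, h⟩ := key (Δ y)
  exact ⟨W, hW, fun f => h f⟩

theorem NC_fd (a : A) (j : ℕ) : FiniteDimensional k (NC Δ a j) := by
  induction j with
  | zero => exact FiniteDimensional.span_of_finite k (Set.finite_singleton a)
  | succ j ih =>
    have hfg : (NC Δ a j).FG := (Submodule.fg_iff_finiteDimensional _).mpr ih
    obtain ⟨s, hs⟩ := hfg
    choose W hWfd hWmem using fun y : A => exists_fd_lact Δ y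
    set Wtot : Submodule k A := s.sup W with hWtot
    have hle : Submodule.span k {z | ∃ (f : A →ₗ[k] k) (y : A), y ∈ NC Δ a j ∧ z = lact Δ f y}
        ≤ Wtot := by
      rw [Submodule.span_le]
      rintro z ⟨f, y, hy, rfl⟩
      rw [← hs] at hy
      have : lact Δ f y ∈ Submodule.map (lact Δ f) (Submodule.span k s) :=
        Submodule.mem_map_of_mem hy
      rw [Submodule.map_span] at this
      refine Submodule.span_le.mpr ?_ this
      rintro _ ⟨x, hx, rfl⟩
      exact Finset.le_sup (f := W) hx (hWmem x f)
    have : FiniteDimensional k Wtot := Submodule.finiteDimensional_finset_sup s W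
    have h2 : FiniteDimensional k (Submodule.span k
        {z | ∃ (f : A →ₗ[k] k) (y : A), y ∈ NC Δ a j ∧ z = lact Δ f y}) :=
      Submodule.finiteDimensional_of_le hle
    exact Submodule.finiteDimensional_sup _ _

theorem NC_le_span_words (a : A) (j : ℕ) :
    NC Δ a j ≤ Submodule.span k {x | ∃ w : List (A →ₗ[k] k), w.length ≤ j ∧ x = LW Δ w a} := by
  induction j with
  | zero =>
    refine Submodule.span_le.mpr ?_
    rintro x rfl
    exact Submodule.subset_span ⟨[], by simp⟩
  | succ j ih =>
    refine sup_le (le_trans ih (Submodule.span_mono ?_)) (Submodule.span_le.mpr ?_)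
    · rintro x ⟨w, hw, rfl⟩; exact ⟨w, Nat.le_succ_of_le hw, rfl⟩
    · rintro z ⟨f, y, hy, rfl⟩
      have hy' := ih hy
      have : lact Δ f y ∈ Submodule.map (lact Δ f) (Submodule.span k
          {x | ∃ w : List (A →ₗ[k] k), w.length ≤ j ∧ x = LW Δ w a}) :=
        Submodule.mem_map_of_mem hy'
      rw [Submodule.map_span] at this
      refine Submodule.span_le.mpr ?_ this
      rintro _ ⟨x, ⟨w, hw, rfl⟩, rfl⟩
      refine Submodule.subset_span ⟨w ++ [f], by simp [hw], ?_⟩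
      · rw [LW_append]; simp

theorem NC_stab (a : A) (M : ℕ) (hM : 1 ≤ M)
    (h : ∀ w : List (A →ₗ[k] k), w.length = M → LW Δ w a ∈ NC Δ a (M-1)) :
    ∀ f : A →ₗ[k] k, ∀ x ∈ NC Δ a (M-1), lact Δ f x ∈ NC Δ a (M-1) := by
  have key : NC Δ a M ≤ NC Δ a (M-1) := by
    refine le_trans (NC_le_span_words Δ a M) (Submodule.span_le.mpr ?_)
    rintro x ⟨w, hw, rfl⟩
    rcases Nat.lt_or_ge w.length M with h' | h'
    · exact NC_mono Δ a (Nat.le_sub_one_of_lt h') (word_mem_NC Δ a w)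
    · exact h w (le_antisymm hw h')
  intro f x hx
  have : lact Δ f x ∈ NC Δ a ((M-1)+1) := lact_mem_NC Δ a hx f
  have hMM : (M-1)+1 = M := Nat.succ_pred_eq_of_pos hM
  rw [hMM] at this
  exact key this

section Words
variable (hc : ∀ f g : A →ₗ[k] k, dmul Δ f g = dmul Δ g f)
  (hJ : ∀ f g : A →ₗ[k] k,
    dmul Δ (dmul Δ (dmul Δ f f) g) f = dmul Δ (dmul Δ f f) (dmul Δ g f))
  (h2 : (2 : k) ≠ 0) (a : A)

set_option maxHeartbeats 1000000


theorem LW_middle (ψ ω : List (A →ₗ[k] k)) (f : A →ₗ[k] k) :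
    LW Δ (ψ ++ f :: ω) a = LW Δ ω (lact Δ f (LW Δ ψ a)) := by
  rw [LW_append]
  simp [LW_cons, LinearMap.comp_apply]

include hc hJ h2 in
theorem swap_mid (ψ ω : List (A →ₗ[k] k)) (f g h : A →ₗ[k] k) :
    LW Δ (ψ ++ f :: g :: h :: ω) a + LW Δ (ψ ++ h :: g :: f :: ω) a
      ∈ NC Δ a (ψ.length + ω.length + 2) := by
  have hy : LW Δ ψ a ∈ NC Δ a ψ.length := word_mem_NC Δ a ψ
  set y := LW Δ ψ a with hydef
  have e1 : LW Δ (ψ ++ f :: g :: h :: ω) a = LW Δ ω (lact Δ h (lact Δ g (lact Δ f y))) := by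
    rw [LW_append, hydef]; simp [LW_cons, LinearMap.comp_apply]
  have e2 : LW Δ (ψ ++ h :: g :: f :: ω) a = LW Δ ω (lact Δ f (lact Δ g (lact Δ h y))) := by
    rw [LW_append, hydef]; simp [LW_cons, LinearMap.comp_apply]
  have e3 := star_id Δ hc hJ h2 f g h y
  have e4 : lact Δ h (lact Δ g (lact Δ f y)) + lact Δ f (lact Δ g (lact Δ h y))
      = lact Δ f (lact Δ (dmul Δ g h) y) + lact Δ h (lact Δ (dmul Δ g f) y)
        + lact Δ g (lact Δ (dmul Δ f h) y) - lact Δ (dmul Δ (dmul Δ f h) g) y := by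
    rw [add_comm]
    exact eq_sub_of_add_eq e3
  rw [e1, e2, ← map_add, e4]
  have mem1 : lact Δ f (lact Δ (dmul Δ g h) y) ∈ NC Δ a (ψ.length + 2) :=
    lact_mem_NC Δ a (lact_mem_NC Δ a hy _) _
  have mem2 : lact Δ h (lact Δ (dmul Δ g f) y) ∈ NC Δ a (ψ.length + 2) :=
    lact_mem_NC Δ a (lact_mem_NC Δ a hy _) _
  have mem3 : lact Δ g (lact Δ (dmul Δ f h) y) ∈ NC Δ a (ψ.length + 2) :=
    lact_mem_NC Δ a (lact_mem_NC Δ a hy _) _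
  have mem4 : lact Δ (dmul Δ (dmul Δ f h) g) y ∈ NC Δ a (ψ.length + 2) :=
    NC_mono Δ a (by omega) (lact_mem_NC Δ a hy _)
  have total : lact Δ f (lact Δ (dmul Δ g h) y) + lact Δ h (lact Δ (dmul Δ g f) y)
      + lact Δ g (lact Δ (dmul Δ f h) y) - lact Δ (dmul Δ (dmul Δ f h) g) y
      ∈ NC Δ a (ψ.length + 2) :=
    Submodule.sub_mem _ (Submodule.add_mem _ (Submodule.add_mem _ mem1 mem2) mem3) mem4
  have := LW_mem_NC Δ a total ω
  exact NC_mono Δ a (by omega) this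

include hc hJ h2 in
theorem move_down {κ : A →ₗ[k] k} (hκ : ∀ y ∈ NC Δ a 1, lact Δ κ y = 0) :
    ∀ (n : ℕ) (ψ ω : List (A →ₗ[k] k)), ψ.length = n →
      LW Δ (ψ ++ κ :: ω) a ∈ NC Δ a (ψ.length + ω.length) := by
  intro n
  induction n using Nat.strong_induction_on with
  | _ n ih =>
    intro ψ ω hlen
    rcases hr : ψ.reverse with _ | ⟨g, rest1⟩
    · -- ψ = []
      have hψ : ψ = [] := by simpa using congrArg List.reverse hr
      subst hψ
      rw [LW_middle]
      simp only [LW_nil, LinearMap.id_coe, id_eq]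
      rw [hκ a (a_mem_NC Δ a 1)]
      simp
    · rcases hr2 : rest1 with _ | ⟨f, rest⟩
      · -- ψ = [g]
        have hψ : ψ = [g] := by
          have := congrArg List.reverse hr
          simp [hr2] at this ⊢
          simpa [hr2] using this
        subst hψ
        rw [LW_middle]
        have : lact Δ κ (LW Δ [g] a) = 0 := by
          refine hκ _ ?_
          simpa using word_mem_NC Δ a [g]
        rw [this]
        simp
      · -- ψ = rest.reverse ++ [f, g]
        have hψ : ψ = rest.reverse ++ [f, g] := by
          have := congrArg List.reverse hr
          rw [hr2] at this
          simpa using this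
        have hlen2 : rest.reverse.length + 2 = n := by
          have h1 := congrArg List.length hψ
          simp only [List.length_append, List.length_cons, List.length_reverse,
            List.length_nil] at h1 ⊢
          omega
        have hsw := swap_mid Δ hc hJ h2 a rest.reverse ω f g κ
        have hmv := ih rest.reverse.length (by omega) rest.reverse (g :: f :: ω) rfl
        -- word1 = rest.reverse ++ [f, g, κ] ++ ω ; word2 = rest.reverse ++ [κ, g, f] ++ ω
        have hassoc : ψ ++ κ :: ω = rest.reverse ++ f :: g :: κ :: ω := by
          rw [hψ]; simp
        have hassoc2 : rest.reverse ++ κ :: (g :: f :: ω) = rest.reverse ++ κ :: g :: f :: ω := rfl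
        rw [hassoc]
        have target_eq : rest.reverse.length + (g :: f :: ω).length
            = ψ.length + ω.length := by
          rw [hψ]
          simp only [List.length_append, List.length_cons, List.length_reverse,
            List.length_nil]
          omega
        rw [hassoc2, target_eq] at hmv
        have : LW Δ (rest.reverse ++ f :: g :: κ :: ω) a
            = (LW Δ (rest.reverse ++ f :: g :: κ :: ω) a
                + LW Δ (rest.reverse ++ κ :: g :: f :: ω) a)
              - LW Δ (rest.reverse ++ κ :: g :: f :: ω) a := by abel
        rw [this]
        refine Submodule.sub_mem _ ?_ hmv
        have : rest.reverse.length + ω.length + 2 = ψ.length + ω.length := by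
          rw [hψ]
          simp only [List.length_append, List.length_cons, List.length_reverse,
            List.length_nil]
          omega
        rw [← this]
        exact hsw

include hc hJ h2 in
theorem equal_letters :
    ∀ (r : ℕ) (ψ μ ω : List (A →ₗ[k] k)) (f : A →ₗ[k] k), μ.length = 2*r+1 →
      LW Δ (ψ ++ f :: (μ ++ f :: ω)) a
        ∈ NC Δ a (ψ.length + μ.length + ω.length + 1) := by
  intro r
  induction r with
  | zero =>
    intro ψ μ ω f hμ
    rcases μ with _ | ⟨g, μ'⟩
    · simp at hμ
    · rcases μ' with _ | _
      · -- μ = [g]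
        have hsw := swap_mid Δ hc hJ h2 a ψ ω f g f
        have e : ψ ++ f :: ([g] ++ f :: ω) = ψ ++ f :: g :: f :: ω := by simp
        rw [e]
        have e2 : LW Δ (ψ ++ f :: g :: f :: ω) a + LW Δ (ψ ++ f :: g :: f :: ω) a
            = (2:k) • LW Δ (ψ ++ f :: g :: f :: ω) a := by
          rw [two_smul]
        rw [e2] at hsw
        have : LW Δ (ψ ++ f :: g :: f :: ω) a
            = (2:k)⁻¹ • ((2:k) • LW Δ (ψ ++ f :: g :: f :: ω) a) := by
          rw [smul_smul, inv_mul_cancel₀ h2, one_smul]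
        rw [this]
        refine Submodule.smul_mem _ _ ?_
        have : ψ.length + ω.length + 2 = ψ.length + [g].length + ω.length + 1 := by
          simp only [List.length_singleton]; omega
        rw [← this]
        exact hsw
      · simp only [List.length_cons, List.length_nil] at hμ; omega
  | succ r ih =>
    intro ψ μ ω f hμ
    rcases μ with _ | ⟨g, μ'⟩
    · simp at hμ
    · rcases μ' with _ | ⟨h, μ''⟩
      · simp only [List.length_cons, List.length_nil] at hμ; omega
      · -- μ = g :: h :: μ''
        have hμ'' : μ''.length = 2*r+1 := by simp only [List.length_cons] at hμ; omega
        have hsw := swap_mid Δ hc hJ h2 a ψ (μ'' ++ f :: ω) f g h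
        have hih := ih (ψ ++ [h, g]) μ'' ω f hμ''
        have e1 : ψ ++ f :: ((g :: h :: μ'') ++ f :: ω)
            = ψ ++ f :: g :: h :: (μ'' ++ f :: ω) := by simp
        have e2 : (ψ ++ [h, g]) ++ f :: (μ'' ++ f :: ω)
            = ψ ++ h :: g :: f :: (μ'' ++ f :: ω) := by simp
        rw [e1]
        rw [e2] at hih
        have ed : LW Δ (ψ ++ f :: g :: h :: (μ'' ++ f :: ω)) a
            = (LW Δ (ψ ++ f :: g :: h :: (μ'' ++ f :: ω)) a
                + LW Δ (ψ ++ h :: g :: f :: (μ'' ++ f :: ω)) a)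
              - LW Δ (ψ ++ h :: g :: f :: (μ'' ++ f :: ω)) a := by abel
    
        rw [ed]
        refine Submodule.sub_mem _ ?_ ?_
        · have : ψ.length + (μ'' ++ f :: ω).length + 2
              = ψ.length + (g :: h :: μ'').length + ω.length + 1 := by
            simp only [List.length_append, List.length_cons]; omega
          rw [← this]
          exact hsw
        · have : (ψ ++ [h, g]).length + μ''.length + ω.length + 1
              = ψ.length + (g :: h :: μ'').length + ω.length + 1 := by
            simp only [List.length_append, List.length_cons, List.length_nil]; omega
          rw [← this]
          exact hih

theorem list_split_pair {α : Type*} (ψ : List α) (u v : ℕ) (huv : u < v) (hv : v < ψ.length) :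
    ∃ (ψ₁ μ ψ₂ : List α), ψ = ψ₁ ++ (ψ[u]'(by omega)) :: (μ ++ (ψ[v]'hv) :: ψ₂)
      ∧ ψ₁.length = u ∧ μ.length = v - u - 1 := by
  refine ⟨ψ.take u, (ψ.drop (u+1)).take (v-u-1), ψ.drop (v+1), ?_, ?_, ?_⟩
  · conv_lhs => rw [← List.take_append_drop u ψ]
    congr 1
    rw [List.drop_eq_getElem_cons (by omega)]
    congr 1
    conv_lhs => rw [← List.take_append_drop (v-u-1) (ψ.drop (u+1))]
    congr 1
    rw [List.drop_drop]
    have e : (u+1) + (v-u-1) = v := by omega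
    rw [e, List.drop_eq_getElem_cons hv]
  · rw [List.length_take]; omega
  · rw [List.length_take, List.length_drop]; omega

theorem lact_add_left' (f₁ f₂ : (A →ₗ[k] k)) (x : A) :
    lact Δ (f₁ + f₂) x = lact Δ f₁ x + lact Δ f₂ x := by
  simp [lact, TensorProduct.map_add_right]

theorem lact_smul_left' (c : k) (f : (A →ₗ[k] k)) (x : A) :
    lact Δ (c • f) x = c • lact Δ f x := by
  simp [lact, TensorProduct.map_smul_right]

include hc hJ h2 in
theorem loc_fin : ∃ B : Submodule k A, FiniteDimensional k ↥B ∧ a ∈ B ∧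
    ∀ f : A →ₗ[k] k, ∀ x ∈ B, lact Δ f x ∈ B := by
  classical
  haveI := NC_fd Δ a 1
  haveI := NC_fd Δ a 2
  set N1 : Submodule k A := NC Δ a 1 with hN1
  set N2 : Submodule k A := NC Δ a 2 with hN2
  let ℓ : (A →ₗ[k] k) →ₗ[k] (↥N1 →ₗ[k] A) :=
    { toFun := fun f => (lact Δ f) ∘ₗ N1.subtype
      map_add' := fun f g => by ext y; simp [lact_add_left']
      map_smul' := fun c f => by ext y; simp [lact_smul_left'] }
  have hℓapp : ∀ (f : A →ₗ[k] k) (y : ↥N1), ℓ f y = lact Δ f (y : A) := fun f y => rfl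
  let P : Submodule k (↥N1 →ₗ[k] A) :=
    { carrier := {T | ∀ y : ↥N1, T y ∈ N2}
      add_mem' := fun hS hT y => by
        simpa using Submodule.add_mem _ (hS y) (hT y)
      zero_mem' := fun y => by simp
      smul_mem' := fun c T hT y => by simpa using Submodule.smul_mem _ c (hT y) }
  have hrange : LinearMap.range ℓ ≤ P := by
    rintro T ⟨f, rfl⟩ y
    have : lact Δ f (y : A) ∈ NC Δ a 2 :=
      NC_mono Δ a (by omega) (lact_mem_NC Δ a y.2 f)
    simpa [hℓapp] using this
  haveI hPfd : FiniteDimensional k ↥P := by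
    let Φ : ↥P →ₗ[k] (↥N1 →ₗ[k] ↥N2) :=
      { toFun := fun T => LinearMap.codRestrict N2 T.1 T.2
        map_add' := fun S T => by ext y; simp
        map_smul' := fun c T => by ext y; simp }
    have hΦ : Function.Injective Φ := by
      intro S T h
      apply Subtype.ext
      apply LinearMap.ext
      intro y
      exact congrArg Subtype.val (LinearMap.congr_fun h y)
    exact FiniteDimensional.of_injective Φ hΦ
  haveI hRfd : FiniteDimensional k ↥(LinearMap.range ℓ) :=
    Submodule.finiteDimensional_of_le hrange
  set n := Module.finrank k ↥(LinearMap.range ℓ) with hn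
  let bR := Module.finBasis k ↥(LinearMap.range ℓ)
  have hpre : ∀ i : Fin n, ∃ q : A →ₗ[k] k, ℓ q = ↑(bR i) := fun i => (bR i).2
  choose p hp using hpre
  have hdec : ∀ f : A →ₗ[k] k, ∃ (c : Fin n → k),
      ∀ y ∈ N1, lact Δ (f - ∑ i, c i • p i) y = 0 := by
    intro f
    have hf : ℓ f ∈ LinearMap.range ℓ := ⟨f, rfl⟩
    set rf : ↥(LinearMap.range ℓ) := ⟨ℓ f, hf⟩ with hrf
    refine ⟨fun i => bR.repr rf i, fun y hy => ?_⟩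
    have hsum : ℓ (∑ i, bR.repr rf i • p i) = ℓ f := by
      rw [map_sum]
      have e1 : ∀ i ∈ Finset.univ, ℓ (bR.repr rf i • p i) = bR.repr rf i • (bR i : ↥N1 →ₗ[k] A) := by
        intro i _
        rw [map_smul, hp i]
      rw [Finset.sum_congr rfl e1]
      have e2 : (∑ i, bR.repr rf i • bR i) = rf := bR.sum_repr rf
      calc (∑ i, bR.repr rf i • ((bR i : ↥(LinearMap.range ℓ)) : ↥N1 →ₗ[k] A))
          = ((∑ i, bR.repr rf i • bR i : ↥(LinearMap.range ℓ)) : ↥N1 →ₗ[k] A) := by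
            push_cast; rfl
        _ = ℓ f := by rw [e2]
    have hz : ℓ (f - ∑ i, bR.repr rf i • p i) = 0 := by
      rw [map_sub, hsum, sub_self]
    exact LinearMap.congr_fun hz ⟨y, hy⟩
  set M := 2*n + 3 with hM
  have claimC : ∀ (t : ℕ) (ω ψ : List (A →ₗ[k] k)), ω.length = t →
      ψ.length + ω.length = M →
      (∀ (i : ℕ) (h : i < ψ.length), i % 2 = 0 → ∃ ii : Fin n, ψ[i]'h = p ii) →
      LW Δ (ψ ++ ω) a ∈ NC Δ a (M - 1) := by
    intro t
    induction t with
    | zero =>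
      intro ω ψ hω hlen hinv
      have hωnil : ω = [] := List.length_eq_zero_iff.mp hω
      subst hωnil
      rw [List.append_nil]
      have hψlen : ψ.length = M := by simpa using hlen
      have hs : ∀ i : Fin (n+2), ∃ ii : Fin n, ψ[2*(i:ℕ)]'(by omega) = p ii := by
        intro i
        exact hinv (2*(i:ℕ)) (by omega) (by omega)
      choose q hq using hs
      obtain ⟨i, j, hij, hqeq⟩ := Fintype.exists_ne_map_eq_of_card_lt q (by simp)
      have hgen : ∀ (i' j' : Fin (n+2)), (i' : ℕ) < (j' : ℕ) → q i' = q j' →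
          LW Δ ψ a ∈ NC Δ a (M - 1) := by
        intro i' j' hlt hqq
        set u := 2*(i' : ℕ) with hu
        set v := 2*(j' : ℕ) with hvv
        have huv : u < v := by omega
        have hv : v < ψ.length := by omega
        obtain ⟨ψ₁, μ, ψ₂, hsplit, hl1, hl2⟩ := list_split_pair ψ u v huv hv
        have heq : ψ[v]'hv = ψ[u]'(by omega) := by
          rw [hq i', hq j', hqq]
        rw [heq] at hsplit
        have hr : μ.length = 2*(((v - u) - 2)/2) + 1 := by omega
        have := equal_letters Δ hc hJ h2 a (((v - u) - 2)/2) ψ₁ μ ψ₂ (ψ[u]'(by omega)) hr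
        rw [← hsplit] at this
        have hidx : ψ₁.length + μ.length + ψ₂.length + 1 = M - 1 := by
          have := congrArg List.length hsplit
          simp only [List.length_append, List.length_cons] at this
          omega
        rw [hidx] at this
        exact this
      rcases Nat.lt_or_ge (i : ℕ) (j : ℕ) with h' | h'
      · exact hgen i j h' hqeq
      · have : (j : ℕ) < (i : ℕ) := by
          rcases Nat.lt_or_ge (j : ℕ) (i : ℕ) with h'' | h''
          · exact h''
          · exact absurd (Fin.ext (by omega)) hij
        exact hgen j i this hqeq.symm
    | succ t ih =>
      intro ω ψ hω hlen hinv
      rcases ω with _ | ⟨e, ω'⟩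
      · simp at hω
      have hω' : ω'.length = t := by simpa using hω
      by_cases hpar : ψ.length % 2 = 1
      · -- even slot, unconstrained
        have hre : ψ ++ e :: ω' = (ψ ++ [e]) ++ ω' := by simp
        rw [hre]
        refine ih ω' (ψ ++ [e]) hω' (by simp at hlen ⊢; omega) ?_
        intro i h hieven
        have hlen1 : (ψ ++ [e]).length = ψ.length + 1 := by simp
        rcases Nat.lt_or_ge i ψ.length with h' | h'
        · obtain ⟨ii, hii⟩ := hinv i h' hieven
          refine ⟨ii, ?_⟩
          rw [List.getElem_append_left h']
          exact hii
        · have : i = ψ.length := by rw [hlen1] at h; omega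
          omega
      · -- odd slot : expand the letter
        have hpar' : ψ.length % 2 = 0 := by omega
        obtain ⟨c, hκ⟩ := hdec e
        set κ := e - ∑ i, c i • p i with hκdef
        let Φ : (A →ₗ[k] k) →ₗ[k] A :=
          { toFun := fun f => LW Δ ω' (lact Δ f (LW Δ ψ a))
            map_add' := fun f g => by simp [lact_add_left']
            map_smul' := fun cc f => by simp [lact_smul_left'] }
        have hΦ : ∀ f, LW Δ (ψ ++ f :: ω') a = Φ f := fun f => by
          rw [LW_middle]; rfl
        rw [hΦ e]
        have he : e = κ + ∑ i, c i • p i := by rw [hκdef]; abel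
        rw [he, map_add, map_sum]
        refine Submodule.add_mem _ ?_ (Submodule.sum_mem _ fun i _ => ?_)
        · rw [← hΦ κ]
          have hmv := move_down Δ hc hJ h2 a (κ := κ) hκ ψ.length ψ ω' rfl
          have hidx : ψ.length + ω'.length = M - 1 := by
            simp only [List.length_cons] at hlen; omega
          rw [hidx] at hmv
          exact hmv
        · rw [map_smul, ← hΦ (p i)]
          refine Submodule.smul_mem _ _ ?_
          have hre : ψ ++ (p i) :: ω' = (ψ ++ [p i]) ++ ω' := by simp
          rw [hre]
          refine ih ω' (ψ ++ [p i]) hω' (by simp at hlen ⊢; omega) ?_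
          intro i' h' hieven
          have hlen1 : (ψ ++ [p i]).length = ψ.length + 1 := by simp
          rcases Nat.lt_or_ge i' ψ.length with h'' | h''
          · obtain ⟨ii, hii⟩ := hinv i' h'' hieven
            refine ⟨ii, ?_⟩
            rw [List.getElem_append_left h'']
            exact hii
          · have hi' : i' = ψ.length := by rw [hlen1] at h'; omega
            refine ⟨i, ?_⟩
            subst hi'
            rw [List.getElem_append_right (le_refl _)]
            simp
  have final : ∀ w : List (A →ₗ[k] k), w.length = M → LW Δ w a ∈ NC Δ a (M-1) := by
    intro w hw
    have := claimC M w [] hw (by simpa using hw) (by intro i h; simp at h)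
    simpa using this
  have hstab := NC_stab Δ a M (by omega) final
  exact ⟨NC Δ a (M-1), NC_fd Δ a (M-1), a_mem_NC Δ a (M-1), hstab⟩

end Words

end Aux


section Rep
variable (Δ : A →ₗ[k] A ⊗[k] A)

theorem lact_zero' (x : A) : lact Δ (0 : A →ₗ[k] k) x = 0 := by
  have := lact_smul_left' Δ (0 : k) 0 x
  simpa using this

theorem commD_apply (f g h : A →ₗ[k] k) (x : A) :
    commD Δ f g h x = h (lact Δ f (lact Δ g x) - lact Δ g (lact Δ f x)) := by
  have e0 : commD Δ f g h = dmul Δ (dmul Δ h f) g - dmul Δ (dmul Δ h g) f := by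
    simp [commD, Rop]
  have e1 : dmul Δ (dmul Δ h f) g x = h (lact Δ f (lact Δ g x)) := by
    rw [pair_lemma, pair_lemma]
  have e2 : dmul Δ (dmul Δ h g) f x = h (lact Δ g (lact Δ f x)) := by
    rw [pair_lemma, pair_lemma]
  rw [e0, LinearMap.sub_apply, e1, e2, map_sub]

theorem commC_pair_fun (f g h : A →ₗ[k] k) :
    commC Δ (f, 0) (g, 0) ((h, 0) : (A →ₗ[k] k) × A) = (commD Δ f g h, 0) := by
  have e0 : commD Δ f g h = dmul Δ (dmul Δ h f) g - dmul Δ (dmul Δ h g) f := by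
    simp [commD, Rop]
  simp only [commC, RopC, LinearMap.sub_apply, LinearMap.comp_apply, LinearMap.coe_mk,
    AddHom.coe_mk, cmul, map_zero, lact_zero', add_zero, zero_add, e0]
  rw [Prod.mk_sub_mk]
  simp

theorem commC_pair_pt (f g : A →ₗ[k] k) (x : A) :
    commC Δ (f, 0) (g, 0) ((0, x) : (A →ₗ[k] k) × A)
      = (0, lact Δ g (lact Δ f x) - lact Δ f (lact Δ g x)) := by
  simp only [commC, RopC, LinearMap.sub_apply, LinearMap.comp_apply, LinearMap.coe_mk,
    AddHom.coe_mk, cmul, map_zero, lact_zero', add_zero, zero_add, dmul_zero_left]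
  rw [Prod.mk_sub_mk]
  simp

theorem intder_rep {i : (A →ₗ[k] k) →ₗ[k] (A →ₗ[k] k)} (hi : i ∈ IntDer Δ) :
    ∃ S : A →ₗ[k] A,
      (∀ (h : A →ₗ[k] k) (x : A), i h x = h (S x)) ∧
      (∀ B : Submodule k A, (∀ f : A →ₗ[k] k, ∀ y ∈ B, lact Δ f y ∈ B) → ∀ b ∈ B, S b ∈ B) ∧
      ∃ j ∈ Submodule.span k {u | ∃ f g : A →ₗ[k] k,
          u = commC Δ ((f, 0) : (A →ₗ[k] k) × A) ((g, 0) : (A →ₗ[k] k) × A)},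
        (∀ h : A →ₗ[k] k, j (h, 0) = (i h, 0)) ∧ (∀ x : A, j (0, x) = (0, - S x)) := by
  induction hi using Submodule.span_induction with
  | mem u hu =>
    obtain ⟨f, g, rfl⟩ := hu
    refine ⟨lact Δ f ∘ₗ lact Δ g - lact Δ g ∘ₗ lact Δ f, ?_, ?_,
      commC Δ (f, 0) (g, 0), Submodule.subset_span ⟨f, g, rfl⟩, ?_, ?_⟩
    · intro h x
      rw [commD_apply]
      simp
    · intro B hB b hb
      simp only [LinearMap.sub_apply, LinearMap.comp_apply]
      exact Submodule.sub_mem _ (hB _ _ (hB _ _ hb)) (hB _ _ (hB _ _ hb))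
    · intro h
      rw [commC_pair_fun]
    · intro x
      rw [commC_pair_pt]
      simp only [LinearMap.sub_apply, LinearMap.comp_apply]
      rw [Prod.mk.injEq]
      exact ⟨rfl, by abel⟩
  | zero =>
    refine ⟨0, by simp, by simp, 0, Submodule.zero_mem _, fun _ => rfl, by simp; rfl⟩
  | add x y hx hy ihx ihy =>
    obtain ⟨S1, hS1, hB1, j1, hj1m, hj1f, hj1p⟩ := ihx
    obtain ⟨S2, hS2, hB2, j2, hj2m, hj2f, hj2p⟩ := ihy
    refine ⟨S1 + S2, ?_, ?_, j1 + j2, Submodule.add_mem _ hj1m hj2m, ?_, ?_⟩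
    · intro h z
      simp only [LinearMap.add_apply, hS1 h z, hS2 h z, map_add]
    · intro B hB b hb
      exact Submodule.add_mem _ (hB1 B hB b hb) (hB2 B hB b hb)
    · intro h
      simp only [LinearMap.add_apply, hj1f h, hj2f h, Prod.mk_add_mk, add_zero]
    · intro z
      simp only [LinearMap.add_apply, hj1p z, hj2p z, Prod.mk_add_mk, add_zero]
      rw [Prod.mk.injEq]
      exact ⟨by simp, by abel⟩
  | smul c x hx ihx =>
    obtain ⟨S1, hS1, hB1, j1, hj1m, hj1f, hj1p⟩ := ihx
    refine ⟨c • S1, ?_, ?_, c • j1, Submodule.smul_mem _ c hj1m, ?_, ?_⟩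
    · intro h z
      simp only [LinearMap.smul_apply, hS1 h z, map_smul]
    · intro B hB b hb
      exact Submodule.smul_mem _ c (hB1 B hB b hb)
    · intro h
      simp only [LinearMap.smul_apply, hj1f h, Prod.smul_mk, smul_zero]
    · intro z
      simp only [LinearMap.smul_apply, hj1p z, Prod.smul_mk, smul_zero]
      rw [Prod.mk.injEq]
      exact ⟨rfl, by rw [smul_neg]⟩

end Rep

section Main
variable (Δ : A →ₗ[k] A ⊗[k] A)

theorem exists_E (hc : ∀ f g : A →ₗ[k] k, dmul Δ f g = dmul Δ g f)
    (hJ : ∀ f g : A →ₗ[k] k,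
      dmul Δ (dmul Δ (dmul Δ f f) g) f = dmul Δ (dmul Δ f f) (dmul Δ g f))
    (h2 : (2:k) ≠ 0) (d : (A →ₗ[k] k) →ₗ[k] (A →ₗ[k] k)) (hd : IsWIntDer Δ d) :
    ∃ E : A →ₗ[k] A, (∀ (f : A →ₗ[k] k) (x : A), f (E x) = d f x) ∧
      (∀ B : Submodule k A, IsSubcoalgebra Δ B → ∀ b ∈ B, E b ∈ B) := by
  classical
  have exu : ∀ x : A, ∃ u : A, (∀ f : A →ₗ[k] k, f u = d f x) ∧
      (∀ B : Submodule k A, IsSubcoalgebra Δ B → x ∈ B → u ∈ B) := by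
    intro x
    obtain ⟨B0, hB0fd, hxB0, hB0st⟩ := loc_fin Δ hc hJ h2 x
    have hB0sc : IsSubcoalgebra Δ B0 := lstable_isSubcoalgebra Δ hc B0 hB0st
    obtain ⟨i, hiI, hagr⟩ := hd.2 B0 hB0sc hB0fd
    obtain ⟨S, hS, hSB, _⟩ := intder_rep Δ hiI
    refine ⟨S x, ?_, ?_⟩
    · intro f
      rw [← hS f x, ← hagr f x hxB0]
    · intro B hBsc hxB
      set B' := B0 ⊓ B with hB'
      have hB'st : ∀ f : A →ₗ[k] k, ∀ y ∈ B', lact Δ f y ∈ B' := by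
        intro f y hy
        exact ⟨hB0st f y hy.1, isSubcoalgebra_lstable Δ B hBsc f y hy.2⟩
      have hB'sc : IsSubcoalgebra Δ B' := lstable_isSubcoalgebra Δ hc B' hB'st
      haveI hB'fd : FiniteDimensional k ↥B' :=
        Submodule.finiteDimensional_of_le (inf_le_left : B' ≤ B0)
      obtain ⟨i', hi'I, hagr'⟩ := hd.2 B' hB'sc hB'fd
      obtain ⟨S', hS', hSB', _⟩ := intder_rep Δ hi'I
      have hxB' : x ∈ B' := ⟨hxB0, hxB⟩
      have heq : S x = S' x := by
        refine sep_eq (k := k) (fun f => ?_)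
        rw [← hS f x, ← hS' f x, ← hagr f x hxB0, ← hagr' f x hxB']
      rw [heq]
      exact (inf_le_right : B' ≤ B) ((hSB' B' hB'st x hxB'))
  choose u hu1 hu2 using exu
  have hadd : ∀ x y : A, u (x + y) = u x + u y := by
    intro x y
    refine sep_eq (k := k) (fun f => ?_)
    rw [hu1 (x+y) f, map_add f, hu1 x f, hu1 y f, map_add (d f)]
  have hsmul : ∀ (c : k) (x : A), u (c • x) = c • u x := by
    intro c x
    refine sep_eq (k := k) (fun f => ?_)
    rw [hu1 (c • x) f, map_smul f, hu1 x f, map_smul (d f)]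
  refine ⟨{ toFun := u
            map_add' := hadd
            map_smul' := hsmul }, ?_, ?_⟩
  · intro f x; exact hu1 x f
  · intro B hB b hb; exact hu2 b B hB hb

end Main

/-- **Proposition 2.** Every weakly inner derivation `d` of `A*` extends to a derivation `D`
of the null extension `C = A* ⊕ A` (with `D = d` on `A*`, and `D` mapping `A` to `A`) such that
(i) `BD ⊆ B` for every subcoalgebra `B`; (ii) `⟨fd, a⟩ = -⟨f, aD⟩` for all `f ∈ A*`, `a ∈ A`;
(iii) on every finite-dimensional subcoalgebra `B`, `D` agrees with an inner derivation
`i` of `A*` (acting on `C`), both on `B` and in the sense `⟨fD, b⟩ = ⟨fi, b⟩`. -/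
theorem prop2_extension {k : Type*} [Field k] {A : Type*} [AddCommGroup A] [Module k A]
    (h2 : (2 : k) ≠ 0) (Δ : A →ₗ[k] A ⊗[k] A) (hJ : IsJordanCoalgebra Δ)
    (one : A →ₗ[k] k) (hone : ∀ f, dmul Δ one f = f ∧ dmul Δ f one = f)
    (d : (A →ₗ[k] k) →ₗ[k] (A →ₗ[k] k)) (hd : IsWIntDer Δ d) :
    ∃ D : ((A →ₗ[k] k) × A) →ₗ[k] ((A →ₗ[k] k) × A),
      (∀ x y, D (cmul Δ x y) = cmul Δ (D x) y + cmul Δ x (D y)) ∧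
      (∀ f : A →ₗ[k] k, D (f, 0) = (d f, 0)) ∧
      (∀ a : A, (D (0, a)).1 = 0) ∧
      (∀ B : Submodule k A, IsSubcoalgebra Δ B → ∀ b ∈ B, (D (0, b)).2 ∈ B) ∧
      (∀ (f : A →ₗ[k] k) (a : A), d f a = - f ((D (0, a)).2)) ∧
      (∀ B : Submodule k A, IsSubcoalgebra Δ B → FiniteDimensional k B →
        ∃ j ∈ Submodule.span k {u | ∃ f g : A →ₗ[k] k,
            u = commC Δ ((f, 0) : (A →ₗ[k] k) × A) ((g, 0) : (A →ₗ[k] k) × A)},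
          (∀ b ∈ B, D (0, b) = j (0, b)) ∧
          (∀ f : A →ₗ[k] k, ∀ b ∈ B, d f b = (j (f, 0)).1 b)) := by
  obtain ⟨hcm, hjd⟩ := hJ
  obtain ⟨E, hE1, hE2⟩ := exists_E Δ hcm hjd h2 d hd
  have hkey : ∀ (f : A →ₗ[k] k) (b : A), E (lact Δ f b) = lact Δ f (E b) - lact Δ (d f) b := by
    intro f b
    refine sep_eq (k := k) (fun h => ?_)
    rw [hE1 h (lact Δ f b), map_sub, ← pair_lemma Δ h f (E b), ← pair_lemma Δ h (d f) b,
      ← pair_lemma Δ (d h) f b, hE1 (dmul Δ h f) b, hd.1 h f, LinearMap.add_apply]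
    abel
  refine ⟨LinearMap.prodMap d (-E), ?_, ?_, ?_, ?_, ?_, ?_⟩
  · intro x y
    rw [Prod.ext_iff]
    constructor
    · simpa [cmul] using hd.1 x.1 y.1
    · simp only [cmul, LinearMap.prodMap_apply, LinearMap.neg_apply, map_add, hkey,
        map_neg, Prod.mk_add_mk, Prod.fst_add, Prod.snd_add]
      abel
  · intro f
    simp [LinearMap.prodMap_apply]
  · intro a
    simp [LinearMap.prodMap_apply]
  · intro B hB b hb
    simpa [LinearMap.prodMap_apply] using B.neg_mem (hE2 B hB b hb)
  · intro f a
    simp only [LinearMap.prodMap_apply, LinearMap.neg_apply, map_neg, neg_neg]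
    rw [hE1 f a]
  · intro B hB hfd
    obtain ⟨i, hiI, hagr⟩ := hd.2 B hB hfd
    obtain ⟨S, hS, hSB, j, hjm, hjf, hjp⟩ := intder_rep Δ hiI
    refine ⟨j, hjm, ?_, ?_⟩
    · intro b hb
      rw [hjp b]
      have heq : E b = S b := by
        refine sep_eq (k := k) (fun f => ?_)
        rw [hE1 f b, hagr f b hb, hS f b]
      simp [LinearMap.prodMap_apply, heq]
    · intro f b hb
      rw [hjf f]
      exact hagr f b hb
end

section
/- Let ⟨A, Δ⟩ be a Jordan coalgebra over a field k of characteristic not 2 whose dual algebra A* is unital, let B be a finite-dimensional subcoalgebra of ⟨A, Δ⟩, and let V be a subspace of A* with A* = V ⊕ B^⊥. Let D = V ⊕ B be the null extension of the dual algebra (V, *) of ⟨B, Δ|_B⟩, and for x, y ∈ D write {x,y} = x'y' − y'x' with right multiplications taken in D. Then Σᵢ{fᵢ, bᵢ} = 0 if and only if Σᵢ[fᵢ, bᵢ] = 0 (fᵢ ∈ V, bᵢ ∈ B), so the spaces {V, B} and [V, B] are isomorphic; and, identifying {V, V} with the space of all linear functionals on [V, B], the inclusion [V, V] ⊆ [V,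 B]* + [V, B]^⊥ holds, where [V, B]^⊥ is the orthogonal complement of [V, B] in the space ([A*, A])* (into which [V, V] is embedded via the embedding of Proposition 3). -/
open TensorProduct

variable {k : Type*} [Field k] {A : Type*} [AddCommGroup A] [Module k A]

/-- Right multiplication in the null extension `D = V ⊕ B` of the dual algebra `(V, *)`
of the finite-dimensional subcoalgebra `B`. -/
noncomputable def RopD {k : Type*} [Field k] {A : Type*} [AddCommGroup A] [Module k A]
    {B : Submodule k A} {V : Submodule k (A →ₗ[k] k)}
    (m : ↥V →ₗ[k] ↥V →ₗ[k] ↥V) (act : ↥V →ₗ[k] ↥B →ₗ[k] ↥B) (x : ↥V × ↥B) :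
    (↥V × ↥B) →ₗ[k] (↥V × ↥B) :=
  LinearMap.prod ((m.flip x.1) ∘ₗ LinearMap.fst k ↥V ↥B)
    (((act.flip x.2) ∘ₗ LinearMap.fst k ↥V ↥B) + ((act x.1) ∘ₗ LinearMap.snd k ↥V ↥B))

/-- The operator `{x,y} = x'y' - y'x'` on `D = V ⊕ B` (right-operator convention). -/
noncomputable def commDD {k : Type*} [Field k] {A : Type*} [AddCommGroup A] [Module k A]
    {B : Submodule k A} {V : Submodule k (A →ₗ[k] k)}
    (m : ↥V →ₗ[k] ↥V →ₗ[k] ↥V) (act : ↥V →ₗ[k] ↥B →ₗ[k] ↥B) (x y : ↥V × ↥B) :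
    (↥V × ↥B) →ₗ[k] (↥V × ↥B) :=
  letI := V.addCommGroup
  RopD m act y ∘ₗ RopD m act x - RopD m act x ∘ₗ RopD m act y

/-- The inner derivation `{f,g}` of the algebra `(V, *)`. -/
noncomputable def commV {k : Type*} [Field k] {A : Type*} [AddCommGroup A] [Module k A]
    {V : Submodule k (A →ₗ[k] k)} (m : ↥V →ₗ[k] ↥V →ₗ[k] ↥V) (f g : ↥V) :
    ↥V →ₗ[k] ↥V :=
  letI := V.addCommGroup
  (m.flip g) ∘ₗ (m.flip f) - (m.flip f) ∘ₗ (m.flip g)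


/-- Auxiliary: `lact Δ h b` depends only on the restriction of `h` to `B`
when `b ∈ B` and `B` is a subcoalgebra. -/
theorem lact_congrB (Δ : A →ₗ[k] A ⊗[k] A) {B : Submodule k A}
    (hB : IsSubcoalgebra Δ B) {b : A} (hb : b ∈ B) {h h' : A →ₗ[k] k}
    (hh : ∀ x ∈ B, h x = h' x) : lact Δ h b = lact Δ h' b := by
  obtain ⟨t, ht⟩ := hB b hb
  have key : ∀ s : ↥B ⊗[k] ↥B,
      (TensorProduct.rid k A) ((TensorProduct.map LinearMap.id h)
        ((TensorProduct.map B.subtype B.subtype) s)) =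
      (TensorProduct.rid k A) ((TensorProduct.map LinearMap.id h')
        ((TensorProduct.map B.subtype B.subtype) s)) := by
    intro s
    induction s using TensorProduct.induction_on with
    | zero => simp
    | tmul x y => simp [hh _ y.2]
    | add p q hp hq => simp only [map_add, hp, hq]
  simp only [lact, LinearMap.coe_comp, LinearEquiv.coe_coe, Function.comp_apply, ← ht]
  exact key t

/-- Auxiliary: `dmul Δ g f b` depends only on the restriction of `g` to `B`
when `b ∈ B` and `B` is a subcoalgebra. -/
theorem dmul_congrB (Δ : A →ₗ[k] A ⊗[k] A) {B : Submodule k A}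
    (hB : IsSubcoalgebra Δ B) {b : A} (hb : b ∈ B) {g g' : A →ₗ[k] k}
    (hg : ∀ x ∈ B, g x = g' x) (f : A →ₗ[k] k) : dmul Δ g f b = dmul Δ g' f b := by
  obtain ⟨t, ht⟩ := hB b hb
  have key : ∀ s : ↥B ⊗[k] ↥B,
      (TensorProduct.lid k k) ((TensorProduct.map g f)
        ((TensorProduct.map B.subtype B.subtype) s)) =
      (TensorProduct.lid k k) ((TensorProduct.map g' f)
        ((TensorProduct.map B.subtype B.subtype) s)) := by
    intro s
    induction s using TensorProduct.induction_on with
    | zero => simp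
    | tmul x y => simp [hg _ x.2]
    | add p q hp hq => simp only [map_add, hp, hq]
  simp only [dmul, LinearMap.coe_comp, LinearEquiv.coe_coe, Function.comp_apply, ← ht]
  exact key t

theorem lact_zero_left (Δ : A →ₗ[k] A ⊗[k] A) (a : A) :
    lact Δ (0 : A →ₗ[k] k) a = 0 := by
  have := lact_smul_left Δ (0 : k) 0 a
  simpa using this

/-- The extension map `End(V × B) → End(A* × A)` given by projecting and including. -/
noncomputable def extMap (B : Submodule k A) (V : Submodule k (A →ₗ[k] k))
    (πV : (A →ₗ[k] k) →ₗ[k] V) (πB : A →ₗ[k] B) :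
    ((↥V × ↥B) →ₗ[k] (↥V × ↥B)) →ₗ[k]
      (((A →ₗ[k] k) × A) →ₗ[k] ((A →ₗ[k] k) × A)) where
  toFun w := (LinearMap.prodMap V.subtype B.subtype) ∘ₗ w ∘ₗ (LinearMap.prodMap πV πB)
  map_add' w₁ w₂ := by apply LinearMap.ext; intro x; simp
  map_smul' c w := by apply LinearMap.ext; intro x; simp

theorem extMap_apply (B : Submodule k A) (V : Submodule k (A →ₗ[k] k))
    (πV : (A →ₗ[k] k) →ₗ[k] V) (πB : A →ₗ[k] B)
    (w : (↥V × ↥B) →ₗ[k] (↥V × ↥B)) (y : (A →ₗ[k] k) × A) :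
    extMap B V πV πB w y
      = (V.subtype (w (πV y.1, πB y.2)).1, B.subtype (w (πV y.1, πB y.2)).2) := rfl

theorem commDD_eval {B : Submodule k A} {V : Submodule k (A →ₗ[k] k)}
    (m : ↥V →ₗ[k] ↥V →ₗ[k] ↥V) (act : ↥V →ₗ[k] ↥B →ₗ[k] ↥B)
    (f : ↥V) (b : ↥B) (y : ↥V × ↥B) :
    commDD m act (f, 0) (0, b) y
      = (0, act (m y.1 f) b - act f (act y.1 b)) := by
  letI := V.addCommGroup
  simp [commDD, RopD]

theorem commMixed_eval (Δ : A →ₗ[k] A ⊗[k] A) (f : A →ₗ[k] k) (a : A)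
    (y : (A →ₗ[k] k) × A) :
    commMixed Δ f a y
      = (0, lact Δ (dmul Δ y.1 f) a - lact Δ f (lact Δ y.1 a)) := by
  simp [commMixed, commC, RopC, cmul, dmul_zero_left, dmul_zero_right, lact_zero_left]

theorem commV_eval {V : Submodule k (A →ₗ[k] k)} (m : ↥V →ₗ[k] ↥V →ₗ[k] ↥V)
    (f g h : ↥V) : commV m f g h = m (m h f) g - m (m h g) f := by
  letI := V.addCommGroup
  simp [commV]

theorem commD_eval (Δ : A →ₗ[k] A ⊗[k] A) (f g h : A →ₗ[k] k) :
    commD Δ f g h = dmul Δ (dmul Δ h f) g - dmul Δ (dmul Δ h g) f := by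
  simp [commD, Rop]

set_option maxHeartbeats 1000000 in
/-- **Proposition 5.** Let `B` be a finite-dimensional subcoalgebra, `A* = V ⊕ B^⊥`,
`(V, *)` the dual algebra of `⟨B, Δ|_B⟩` (Proposition 4) acting on `B`, and
`D = V ⊕ B` its null extension with commutator operators `{x,y}`.  Then
`Σ{fᵢ,bᵢ} = 0 ↔ Σ[fᵢ,bᵢ] = 0`, so `{V,B} ≅ [V,B]`; and, identifying `{V,V}` with
linear functionals on `[V,B]` (via Proposition 3's embedding `φ` into `([A*,A])*`),
`[V,V] ⊆ [V,B]* + [V,B]^⊥`. -/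
theorem prop5 {k : Type*} [Field k] {A : Type*} [AddCommGroup A] [Module k A]
    (h2 : (2 : k) ≠ 0) (Δ : A →ₗ[k] A ⊗[k] A) (hJ : IsJordanCoalgebra Δ)
    (one : A →ₗ[k] k) (hone : ∀ f, dmul Δ one f = f ∧ dmul Δ f one = f)
    (B : Submodule k A) (hB : IsSubcoalgebra Δ B) (hBfin : FiniteDimensional k B)
    (V : Submodule k (A →ₗ[k] k)) (hcompl : IsCompl V B.dualAnnihilator)
    (m : ↥V →ₗ[k] ↥V →ₗ[k] ↥V)
    (hm : ∀ (f g : ↥V), ∀ b ∈ B, ((m f g : A →ₗ[k] k)) b = dmul Δ (f : A →ₗ[k] k) g b)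
    (act : ↥V →ₗ[k] ↥B →ₗ[k] ↥B)
    (hact : ∀ (f : ↥V) (b : ↥B), ((act f b : A)) = lact Δ (f : A →ₗ[k] k) (b : A))
    (φ : ↥(WIntDer Δ) →ₗ[k] (↥(CommAA Δ) →ₗ[k] k))
    (hφ : ∀ (e : ↥(WIntDer Δ)) (f : A →ₗ[k] k) (a : A) (h : commMixed Δ f a ∈ CommAA Δ),
      φ e ⟨commMixed Δ f a, h⟩ = (e : ((A →ₗ[k] k) →ₗ[k] (A →ₗ[k] k))) f a)
    (hφbij : Function.Bijective φ) :
    (∀ (n : ℕ) (f : Fin n → ↥V) (b : Fin n → ↥B),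
      (∑ i, commDD m act (f i, 0) (0, b i)) = 0 ↔
      (∑ i, commMixed Δ ((f i : A →ₗ[k] k)) ((b i : A))) = 0) ∧
    (∃ e : ↥(Submodule.span k {u | ∃ (f : ↥V) (b : ↥B), u = commDD m act (f, 0) (0, b)})
        ≃ₗ[k] ↥(Submodule.span k
          {u | ∃ (f : ↥V) (b : ↥B), u = commMixed Δ ((f : A →ₗ[k] k)) ((b : A))}),
      ∀ (f : ↥V) (b : ↥B)
        (h : commDD m act (f, 0) (0, b) ∈
          Submodule.span k {u | ∃ (f : ↥V) (b : ↥B), u = commDD m act (f, 0) (0, b)})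
        (h' : commMixed Δ ((f : A →ₗ[k] k)) ((b : A)) ∈ Submodule.span k
          {u | ∃ (f : ↥V) (b : ↥B), u = commMixed Δ ((f : A →ₗ[k] k)) ((b : A))}),
        e ⟨commDD m act (f, 0) (0, b), h⟩
          = ⟨commMixed Δ ((f : A →ₗ[k] k)) ((b : A)), h'⟩) ∧
    (∀ (u : (A →ₗ[k] k) →ₗ[k] (A →ₗ[k] k)),
      u ∈ Submodule.span k
        {w | ∃ (f g : ↥V), w = commD Δ ((f : A →ₗ[k] k)) ((g : A →ₗ[k] k))} →
      ∀ hu : u ∈ WIntDer Δ,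
      ∃ (w : ↥(CommAA Δ) →ₗ[k] k) (i : ↥V →ₗ[k] ↥V),
        i ∈ Submodule.span k {j | ∃ (f g : ↥V), j = commV m f g} ∧
        (∀ (f : ↥V) (b : ↥B) (h : commMixed Δ ((f : A →ₗ[k] k)) ((b : A)) ∈ CommAA Δ),
          w ⟨commMixed Δ ((f : A →ₗ[k] k)) ((b : A)), h⟩ = ((i f : A →ₗ[k] k)) (b : A)) ∧
        (∀ v : ↥(CommAA Δ),
          (v : ((A →ₗ[k] k) × A) →ₗ[k] ((A →ₗ[k] k) × A)) ∈ Submodule.span k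
            {u' | ∃ (f : ↥V) (b : ↥B), u' = commMixed Δ ((f : A →ₗ[k] k)) ((b : A))} →
          φ ⟨u, hu⟩ v = w v)) := by

  classical
  obtain ⟨B', hB'⟩ := Submodule.exists_isCompl B
  set πV : (A →ₗ[k] k) →ₗ[k] V := V.linearProjOfIsCompl B.dualAnnihilator hcompl with hπVdef
  set πB : A →ₗ[k] B := B.linearProjOfIsCompl B' hB' with hπBdef
  have hπV1 : ∀ v : ↥V, πV ↑v = v := fun v =>
    Submodule.linearProjOfIsCompl_apply_left hcompl v
  have hπB1 : ∀ b : ↥B, πB ↑b = b := fun b =>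
    Submodule.linearProjOfIsCompl_apply_left hB' b
  have hgg : ∀ (g : A →ₗ[k] k), ∀ x ∈ B, ((πV g : A →ₗ[k] k)) x = g x := by
    intro g x hx
    have hg' : g ∈ V ⊔ B.dualAnnihilator := by
      rw [hcompl.sup_eq_top]; exact Submodule.mem_top
    obtain ⟨v, hv, w, hw, rfl⟩ := Submodule.mem_sup.mp hg'
    have h1 : πV (v + w) = ⟨v, hv⟩ := by
      rw [map_add]
      have e1 : πV v = ⟨v, hv⟩ :=
        Submodule.linearProjOfIsCompl_apply_left hcompl ⟨v, hv⟩
      have e2 : πV w = 0 :=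
        Submodule.linearProjOfIsCompl_apply_right hcompl ⟨w, hw⟩
      rw [e1, e2, add_zero]
    rw [h1]
    rw [Submodule.mem_dualAnnihilator] at hw
    have hwx : w x = 0 := hw x hx
    simp [hwx]
  set E := extMap B V πV πB with hEdef
  -- generator identity
  have hGen : ∀ (f : ↥V) (b : ↥B),
      E (commDD m act (f, 0) (0, b)) = commMixed Δ (↑f) (↑b) := by
    intro f b
    apply LinearMap.ext; rintro ⟨g, a⟩
    rw [hEdef, extMap_apply, commMixed_eval]
    rw [commDD_eval m act f b (πV g, πB a)]
    have e1 : (↑(act (m (πV g) f) b) : A) = lact Δ (dmul Δ g ↑f) ↑b := by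
      rw [hact]
      have h1 : lact Δ ↑(m (πV g) f) (↑b : A) = lact Δ (dmul Δ ↑(πV g) ↑f) ↑b :=
        lact_congrB Δ hB b.2 (fun x hx => hm (πV g) f x hx)
      have h2 : lact Δ (dmul Δ ↑(πV g) ↑f) (↑b : A) = lact Δ (dmul Δ g ↑f) ↑b :=
        lact_congrB Δ hB b.2 (fun x hx => dmul_congrB Δ hB hx (fun y hy => hgg g y hy) ↑f)
      rw [h1, h2]
    have e2 : (↑(act f (act (πV g) b)) : A) = lact Δ ↑f (lact Δ g ↑b) := by
      rw [hact]
      congr 1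
      rw [hact]
      exact lact_congrB Δ hB b.2 (fun x hx => hgg g x hx)
    simp only [Submodule.coe_subtype, AddSubgroupClass.coe_sub, map_zero]
    rw [e1, e2]
  -- injectivity of the extension map
  have hzero : ∀ w, E w = 0 → w = 0 := by
    intro w hw
    apply LinearMap.ext; rintro ⟨g, c⟩
    have h := LinearMap.congr_fun hw ((↑g : A →ₗ[k] k), (↑c : A))
    rw [hEdef, extMap_apply] at h
    simp only [hπV1, hπB1, LinearMap.zero_apply, Prod.mk_eq_zero,
      Submodule.coe_subtype, ZeroMemClass.coe_eq_zero] at h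
    rw [LinearMap.zero_apply]
    exact Prod.ext h.1 h.2
  have hInj : Function.Injective E := by
    intro x y hxy
    letI := V.addCommGroup
    have h0 : E (x - y) = 0 := by
      have hsub : E (x - y) = E x - E y := map_sub E x y
      rw [hsub, hxy]
      exact sub_self (E y)
    have := hzero (x - y) h0
    exact sub_eq_zero.mp this
  refine ⟨?_, ?_, ?_⟩
  · -- first conjunct
    intro n f b
    have hsum : E (∑ i, commDD m act (f i, 0) (0, b i))
        = ∑ i, commMixed Δ (↑(f i)) (↑(b i)) := by
      rw [map_sum]
      exact Finset.sum_congr rfl (fun i _ => hGen (f i) (b i))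
    constructor
    · intro h; rw [← hsum, h, map_zero]
    · intro h
      apply hInj
      rw [hsum, h, map_zero]
  · -- second conjunct
    set SD := Submodule.span k {u | ∃ (f : ↥V) (b : ↥B), u = commDD m act (f, 0) (0, b)}
      with hSD
    set SM := Submodule.span k
      {u | ∃ (f : ↥V) (b : ↥B), u = commMixed Δ ((f : A →ₗ[k] k)) ((b : A))} with hSM
    have hmap : ∀ x ∈ SD, E x ∈ SM := by
      intro x hx
      have : Submodule.map E SD ≤ SM := by
        rw [hSD, Submodule.map_span]
        apply Submodule.span_mono
        rintro _ ⟨u, ⟨f, b, rfl⟩, rfl⟩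
        exact ⟨f, b, hGen f b⟩
      exact this ⟨x, hx, rfl⟩
    have hmap' : SM ≤ Submodule.map E SD := by
      rw [hSM]
      apply Submodule.span_le.mpr
      rintro u ⟨f, b, rfl⟩
      exact ⟨commDD m act (f, 0) (0, b), Submodule.subset_span ⟨f, b, rfl⟩, hGen f b⟩
    set E' : ↥SD →ₗ[k] ↥SM := E.restrict hmap with hE'def
    have hbij : Function.Bijective E' := by
      constructor
      · intro x y hxy
        apply Subtype.ext
        apply hInj
        exact Subtype.ext_iff.mp hxy
      · rintro ⟨y, hy⟩
        obtain ⟨x, hx, hxy⟩ := hmap' hy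
        exact ⟨⟨x, hx⟩, Subtype.ext hxy⟩
    refine ⟨LinearEquiv.ofBijective E' hbij, ?_⟩
    intro f b h h'
    apply Subtype.ext
    rw [LinearEquiv.ofBijective_apply]
    exact hGen f b
  · -- third conjunct
    intro u huspan hu
    have hgen3 : ∀ (f₀ g₀ f : ↥V) (b : ↥B),
        ((commV m f₀ g₀ f : A →ₗ[k] k)) (↑b : A) = commD Δ ↑f₀ ↑g₀ ↑f ↑b := by
      intro f₀ g₀ f b
      rw [commV_eval, commD_eval]
      simp only [AddSubgroupClass.coe_sub, LinearMap.sub_apply]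
      have e1 : ((m (m f f₀) g₀ : A →ₗ[k] k)) ↑b = dmul Δ (dmul Δ ↑f ↑f₀) ↑g₀ ↑b := by
        rw [hm (m f f₀) g₀ ↑b b.2]
        exact dmul_congrB Δ hB b.2 (fun x hx => hm f f₀ x hx) ↑g₀
      have e2 : ((m (m f g₀) f₀ : A →ₗ[k] k)) ↑b = dmul Δ (dmul Δ ↑f ↑g₀) ↑f₀ ↑b := by
        rw [hm (m f g₀) f₀ ↑b b.2]
        exact dmul_congrB Δ hB b.2 (fun x hx => hm f g₀ x hx) ↑f₀
      rw [e1, e2]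
    have hex : ∃ i ∈ Submodule.span k {j | ∃ (f g : ↥V), j = commV m f g},
        ∀ (f : ↥V) (b : ↥B), ((i f : A →ₗ[k] k)) (↑b : A) = u ↑f ↑b := by
      clear hu
      induction huspan using Submodule.span_induction with
      | mem x hx =>
        obtain ⟨f₀, g₀, rfl⟩ := hx
        exact ⟨commV m f₀ g₀, Submodule.subset_span ⟨f₀, g₀, rfl⟩,
          fun f b => hgen3 f₀ g₀ f b⟩
      | zero => exact ⟨0, Submodule.zero_mem _, fun f b => by simp⟩
      | add x y hx hy ihx ihy =>
        obtain ⟨i₁, hi₁, h₁⟩ := ihx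
        obtain ⟨i₂, hi₂, h₂⟩ := ihy
        refine ⟨i₁ + i₂, Submodule.add_mem _ hi₁ hi₂, fun f b => ?_⟩
        simp only [LinearMap.add_apply, Submodule.coe_add]
        rw [← h₁ f b, ← h₂ f b]
      | smul c x hx ihx =>
        obtain ⟨i, hi, h⟩ := ihx
        refine ⟨c • i, Submodule.smul_mem _ c hi, fun f b => ?_⟩
        simp only [LinearMap.smul_apply, Submodule.coe_smul]
        rw [← h f b]
    obtain ⟨i, hi, hifb⟩ := hex
    refine ⟨φ ⟨u, hu⟩, i, hi, ?_, ?_⟩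
    · intro f b h
      rw [hφ ⟨u, hu⟩ ↑f ↑b h, hifb f b]
    · intro v _
      rfl
end
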